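/- Let X₀ and X₁ be independent random variables, each uniformly distributed on [−2, 2], and set Ω₀ = arccos(X₀/2), Ω₁ = arccos(X₁/2). Then the product sin Ω₀ · sin Ω₁ has probability density function f(x) = ∫_x^1 x / (√(y² − x²)·√(1 − y²)) dy for 0 < x < 1 (and f(x) = 0 outside (0, 1)), with respect to Lebesgue measure. -/

import Mathlib

open MeasureTheory ProbabilityTheory Set Real

noncomputable def gE : ℝ → ENNReal :=
  (Set.Ioo (0:ℝ) 1).indicator (fun y => ENNReal.ofReal (y / Real.sqrt (1 - y^2)))

lemma gE_meas : Measurable gE :=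
  (Measurable.ennreal_ofReal (measurable_id.div ((Real.continuous_sqrt.measurable).comp ((measurable_const.sub (measurable_id.pow_const 2)))))).indicator measurableSet_Ioo

lemma deriv_neg_sqrt {y : ℝ} (h1 : -1 < y) (h2 : y < 1) :
    HasDerivAt (fun y : ℝ => -Real.sqrt (1 - y^2)) (y / Real.sqrt (1 - y^2)) y := by
  have hne : (1 - y^2) ≠ 0 := by nlinarith
  have h := ((Real.hasDerivAt_sqrt hne).comp y (((hasDerivAt_id y).pow 2).const_sub 1)).neg
  refine h.congr_deriv ?_
  simp
  field_simp

lemma int_g {t : ℝ} (h0 : 0 ≤ t) (h1 : t < 1) :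
    ∫ y in (0:ℝ)..t, y / Real.sqrt (1 - y^2) = 1 - Real.sqrt (1 - t^2) := by
  have key : ∀ y ∈ Set.uIcc (0:ℝ) t,
      HasDerivAt (fun y : ℝ => -Real.sqrt (1 - y^2)) (y / Real.sqrt (1 - y^2)) y := by
    intro y hy
    rw [Set.uIcc_of_le h0] at hy
    exact deriv_neg_sqrt (by linarith [hy.1]) (by linarith [hy.2])
  have hcont : ContinuousOn (fun y : ℝ => y / Real.sqrt (1 - y^2)) (Set.uIcc 0 t) := by
    apply ContinuousOn.div continuousOn_id
    · exact (Real.continuous_sqrt.comp (by continuity)).continuousOn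
    · intro y hy
      rw [Set.uIcc_of_le h0] at hy
      have : (0:ℝ) < 1 - y^2 := by nlinarith [hy.1, hy.2]
      positivity
  rw [intervalIntegral.integral_eq_sub_of_hasDerivAt key (hcont.intervalIntegrable)]
  simp [Real.sqrt_one]
  ring

lemma integrableOn_g {t : ℝ} (h0 : 0 ≤ t) (h1 : t < 1) :
    IntegrableOn (fun y : ℝ => y / Real.sqrt (1 - y^2)) (Set.Ioc 0 t) := by
  have hc : ContinuousOn (fun y : ℝ => y / Real.sqrt (1 - y^2)) (Set.Icc 0 t) := by
    apply ContinuousOn.div continuousOn_id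
      ((Real.continuous_sqrt.comp (by continuity)).continuousOn)
    intro y hy
    have : (0:ℝ) < 1 - y^2 := by nlinarith [hy.1, hy.2]
    exact (Real.sqrt_pos.2 this).ne'
  exact (hc.integrableOn_compact isCompact_Icc).mono_set Set.Ioc_subset_Icc_self

lemma lint_mid {t : ℝ} (h0 : 0 ≤ t) (h1 : t < 1) :
    ∫⁻ y in Set.Ioc (0:ℝ) t, ENNReal.ofReal (y / Real.sqrt (1 - y^2))
      = ENNReal.ofReal (1 - Real.sqrt (1 - t^2)) := by
  rw [← ofReal_integral_eq_lintegral_ofReal (integrableOn_g h0 h1)]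
  · rw [← intervalIntegral.integral_of_le h0, int_g h0 h1]
  · filter_upwards [ae_restrict_mem measurableSet_Ioc] with y hy
    exact div_nonneg hy.1.le (Real.sqrt_nonneg _)

lemma lint_one :
    ∫⁻ y in Set.Ioo (0:ℝ) 1, ENNReal.ofReal (y / Real.sqrt (1 - y^2)) = 1 := by
  set ν := volume.withDensity (fun y : ℝ => ENNReal.ofReal (y / Real.sqrt (1 - y^2))) with hν
  have hm : Measurable (fun y : ℝ => ENNReal.ofReal (y / Real.sqrt (1 - y^2))) :=
    Measurable.ennreal_ofReal (measurable_id.div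
      ((Real.continuous_sqrt.measurable).comp ((measurable_const.sub (measurable_id.pow_const 2)))))
  have hap : ∀ s : Set ℝ, MeasurableSet s →
      ν s = ∫⁻ y in s, ENNReal.ofReal (y / Real.sqrt (1 - y^2)) :=
    fun s hs => withDensity_apply _ hs
  have hsets : Set.Ioo (0:ℝ) 1 = ⋃ n : ℕ, Set.Ioc (0:ℝ) (1 - 1/(n+1)) := by
    ext y
    simp only [Set.mem_Ioo, Set.mem_iUnion, Set.mem_Ioc]
    constructor
    · rintro ⟨hy0, hy1⟩
      obtain ⟨n, hn⟩ := exists_nat_one_div_lt (show (0:ℝ) < 1 - y by linarith)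
      exact ⟨n, hy0, by push_cast at hn ⊢; linarith⟩
    · rintro ⟨n, hy0, hy1⟩
      have : (0:ℝ) < 1/(n+1) := by positivity
      exact ⟨hy0, by linarith⟩
  have hmono : Monotone (fun n : ℕ => Set.Ioc (0:ℝ) (1 - 1/(n+1))) := by
    intro m n hmn
    apply Set.Ioc_subset_Ioc le_rfl
    have h1 : (1:ℝ)/(n+1) ≤ 1/(m+1) := by
      apply one_div_le_one_div_of_le (by positivity)
      push_cast; exact_mod_cast by exact_mod_cast add_le_add_left (Nat.cast_le.2 hmn) 1
    linarith
  have key : ν (Set.Ioo (0:ℝ) 1) = ⨆ n : ℕ, ν (Set.Ioc (0:ℝ) (1 - 1/(n+1))) := by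
    rw [hsets, hmono.directed_le.measure_iUnion]
  have hval : ∀ n : ℕ, ν (Set.Ioc (0:ℝ) (1 - 1/(n+1)))
      = ENNReal.ofReal (1 - Real.sqrt (1 - (1 - 1/(n+1))^2)) := by
    intro n
    have h0 : (0:ℝ) ≤ 1 - 1/(n+1) := by
      have : (1:ℝ)/(n+1) ≤ 1 := by
        apply div_le_one_of_le₀ <;> [linarith [Nat.cast_nonneg (α := ℝ) n]; positivity]
      linarith
    have h1 : (1:ℝ) - 1/(n+1) < 1 := by
      have : (0:ℝ) < 1/(n+1) := by positivity
      linarith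
    rw [hap _ measurableSet_Ioc, lint_mid h0 h1]
  have hmono2 : Monotone (fun n : ℕ => ν (Set.Ioc (0:ℝ) (1 - 1/(n+1)))) :=
    fun m n h => measure_mono (hmono h)
  have hlim1 : Filter.Tendsto (fun n : ℕ => ν (Set.Ioc (0:ℝ) (1 - 1/(n+1))))
      Filter.atTop (nhds (⨆ n : ℕ, ν (Set.Ioc (0:ℝ) (1 - 1/(n+1))))) :=
    tendsto_atTop_iSup hmono2
  have hlimr : Filter.Tendsto (fun n : ℕ => (1 - Real.sqrt (1 - (1 - 1/((n:ℝ)+1))^2)))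
      Filter.atTop (nhds 1) := by
    have hbase : Filter.Tendsto (fun n : ℕ => 1/((n:ℝ)+1)) Filter.atTop (nhds 0) :=
      tendsto_one_div_add_atTop_nhds_zero_nat
    have hc : Continuous (fun u : ℝ => 1 - Real.sqrt (1 - (1 - u)^2)) := by
      continuity
    have := (hc.tendsto 0).comp hbase
    simpa [Function.comp_def] using this
  have hlim2 : Filter.Tendsto (fun n : ℕ => ν (Set.Ioc (0:ℝ) (1 - 1/(n+1))))
      Filter.atTop (nhds 1) := by
    have := (ENNReal.continuous_ofReal.tendsto 1).comp hlimr
    simp only [Function.comp_def] at this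
    convert this using 2 with n
    · exact hval n
    · simp
  rw [← hap _ measurableSet_Ioo, key, tendsto_nhds_unique hlim1 hlim2]

lemma phi_eq (x : ℝ) : Real.sin (Real.arccos (x/2)) = Real.sqrt (1 - (x/2)^2) :=
  Real.sin_arccos _

lemma phi_meas : Measurable (fun x : ℝ => Real.sin (Real.arccos (x/2))) :=
  (Real.continuous_sin.comp (Real.continuous_arccos.comp (continuous_id.div_const 2))).measurable

lemma setA_neg {t : ℝ} (ht : t < 0) :
    {x : ℝ | Real.sin (Real.arccos (x/2)) ≤ t} ∩ Set.Icc (-2:ℝ) 2 = ∅ := by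
  ext x
  simp only [Set.mem_inter_iff, Set.mem_setOf_eq, Set.mem_empty_iff_false, iff_false]
  rintro ⟨h1, _⟩
  rw [phi_eq] at h1
  linarith [Real.sqrt_nonneg (1 - (x/2)^2)]

lemma setA_mid {t : ℝ} (h0 : 0 ≤ t) (h1 : t < 1) :
    {x : ℝ | Real.sin (Real.arccos (x/2)) ≤ t} ∩ Set.Icc (-2:ℝ) 2
      = Set.Icc (-2) (-(2*Real.sqrt (1-t^2))) ∪ Set.Icc (2*Real.sqrt (1-t^2)) 2 := by
  have ht2 : (0:ℝ) < 1 - t^2 := by nlinarith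
  have hr : (0:ℝ) < Real.sqrt (1-t^2) := Real.sqrt_pos.2 ht2
  have hrsq : (Real.sqrt (1-t^2))^2 = 1 - t^2 := Real.sq_sqrt ht2.le
  ext x
  simp only [Set.mem_inter_iff, Set.mem_setOf_eq, Set.mem_Icc, Set.mem_union, phi_eq,
    Real.sqrt_le_iff]
  constructor
  · rintro ⟨⟨-, hle⟩, hx1, hx2⟩
    rcases le_or_gt x 0 with hx | hx
    · left; constructor; · exact hx1
      nlinarith
    · right; constructor; · nlinarith
      exact hx2
  · rintro (⟨hx1, hx2⟩ | ⟨hx1, hx2⟩) <;>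
    · refine ⟨⟨h0, by nlinarith⟩, by nlinarith, by nlinarith⟩

lemma setA_ge {t : ℝ} (h1 : 1 ≤ t) :
    {x : ℝ | Real.sin (Real.arccos (x/2)) ≤ t} ∩ Set.Icc (-2:ℝ) 2 = Set.Icc (-2:ℝ) 2 := by
  apply Set.inter_eq_self_of_subset_right
  intro x _
  simp only [Set.mem_setOf_eq, phi_eq]
  exact le_trans (Real.sqrt_le_one.2 (by nlinarith [sq_nonneg (x/2)])) h1

lemma mapA : Measure.map (fun x : ℝ => Real.sin (Real.arccos (x/2)))
    ((4:ENNReal)⁻¹ • volume.restrict (Set.Icc (-2:ℝ) 2)) = volume.withDensity gE := by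
  have hfin : IsFiniteMeasure (Measure.map (fun x : ℝ => Real.sin (Real.arccos (x/2)))
      ((4:ENNReal)⁻¹ • volume.restrict (Set.Icc (-2:ℝ) 2))) := by
    constructor
    rw [Measure.map_apply phi_meas MeasurableSet.univ]
    simp only [Set.preimage_univ, Measure.smul_apply, Measure.restrict_apply MeasurableSet.univ,
      Set.univ_inter, Real.volume_Icc, smul_eq_mul]
    rw [show (2:ℝ) - -2 = 4 by norm_num,
      show ENNReal.ofReal (4:ℝ) = 4 by norm_num [ENNReal.ofReal_ofNat]]
    exact ENNReal.mul_lt_top (by norm_num) (by norm_num)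
  refine Measure.ext_of_Iic _ _ (fun t => ?_)
  rw [Measure.map_apply phi_meas measurableSet_Iic, Measure.smul_apply,
    Measure.restrict_apply (phi_meas measurableSet_Iic),
    withDensity_apply _ measurableSet_Iic]
  have hpre : (fun x : ℝ => Real.sin (Real.arccos (x/2))) ⁻¹' Set.Iic t
      = {x : ℝ | Real.sin (Real.arccos (x/2)) ≤ t} := rfl
  rw [hpre]
  rw [show ∫⁻ y in Set.Iic t, gE y =
      ∫⁻ y in Set.Ioo (0:ℝ) 1 ∩ Set.Iic t, ENNReal.ofReal (y / Real.sqrt (1 - y^2)) by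
    rw [gE, ← Measure.restrict_restrict measurableSet_Ioo]
    exact lintegral_indicator measurableSet_Ioo _]
  rcases lt_or_ge t 0 with ht | ht
  · rw [setA_neg ht, show Set.Ioo (0:ℝ) 1 ∩ Set.Iic t = ∅ by
      ext y; simp only [Set.mem_inter_iff, Set.mem_Ioo, Set.mem_Iic, Set.mem_empty_iff_false,
        iff_false]; rintro ⟨⟨h1, _⟩, h2⟩; linarith]
    simp
  rcases lt_or_ge t 1 with ht1 | ht1
  · rw [setA_mid ht ht1, show Set.Ioo (0:ℝ) 1 ∩ Set.Iic t = Set.Ioc 0 t by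
      ext y; simp only [Set.mem_inter_iff, Set.mem_Ioo, Set.mem_Iic, Set.mem_Ioc]
      constructor
      · rintro ⟨⟨a, b⟩, c⟩; exact ⟨a, c⟩
      · rintro ⟨a, b⟩; exact ⟨⟨a, by linarith⟩, b⟩]
    rw [lint_mid ht ht1]
    set r := Real.sqrt (1 - t^2) with hrdef
    have ht2 : (0:ℝ) < 1 - t^2 := by nlinarith
    have hr0 : (0:ℝ) < r := Real.sqrt_pos.2 ht2
    have hr1 : r ≤ 1 := by
      rw [hrdef]
      exact Real.sqrt_le_one.2 (by nlinarith)
    rw [measure_union _ measurableSet_Icc]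
    · rw [Real.volume_Icc, Real.volume_Icc, ← ENNReal.ofReal_add (by linarith) (by linarith)]
      rw [show -(2*r) - -2 + (2 - 2*r) = 4*(1-r) by ring]
      rw [show (4:ENNReal)⁻¹ = ENNReal.ofReal (4:ℝ)⁻¹ by
        rw [ENNReal.ofReal_inv_of_pos (by norm_num)]; norm_num]
      rw [smul_eq_mul, ← ENNReal.ofReal_mul (by norm_num)]
      congr 1
      ring
    · rw [Set.disjoint_left]
      rintro x ⟨_, hx2⟩ ⟨hx3, _⟩
      linarith
  · rw [setA_ge ht1, show Set.Ioo (0:ℝ) 1 ∩ Set.Iic t = Set.Ioo 0 1 by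
      apply Set.inter_eq_self_of_subset_left
      intro y hy; exact le_trans hy.2.le ht1]
    rw [lint_one, Real.volume_Icc]
    rw [show (2:ℝ) - -2 = 4 by norm_num, smul_eq_mul]
    rw [show ENNReal.ofReal (4:ℝ) = (4:ENNReal) by norm_num [ENNReal.ofReal_ofNat]]
    rw [ENNReal.inv_mul_cancel (by norm_num) (by norm_num)]

lemma sqrt_inv_rpow {u : ℝ} (hu : 0 < u) : (Real.sqrt u)⁻¹ = u ^ (-(1/2) : ℝ) := by
  rw [Real.sqrt_eq_rpow, ← Real.rpow_neg hu.le]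

lemma integrable_B {x : ℝ} (hx0 : 0 < x) (hx1 : x < 1) :
    IntegrableOn (fun y : ℝ => (Real.sqrt (y-x))⁻¹ * (Real.sqrt (1-y))⁻¹) (Set.Ioo x 1) := by
  set m := (x+1)/2 with hm
  have hxm : x < m := by rw [hm]; linarith
  have hm1 : m < 1 := by rw [hm]; linarith
  have hB_meas : Measurable (fun y : ℝ => (Real.sqrt (y-x))⁻¹ * (Real.sqrt (1-y))⁻¹) :=
    ((Real.continuous_sqrt.measurable.comp (measurable_id.sub_const x)).inv).mul
      ((Real.continuous_sqrt.measurable.comp (measurable_const.sub measurable_id)).inv)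
  have h1 : IntegrableOn (fun y : ℝ => (y - x) ^ (-(1/2) : ℝ)) (Set.Ioc x m) := by
    have := (intervalIntegral.intervalIntegrable_rpow' (a := 0) (b := m - x)
      (r := -(1/2)) (by norm_num)).comp_sub_right x
    rw [zero_add, show m - x + x = m by ring] at this
    exact (intervalIntegrable_iff_integrableOn_Ioc_of_le hxm.le).1 this
  have h2 : IntegrableOn (fun y : ℝ => (1 - y) ^ (-(1/2) : ℝ)) (Set.Ioc m 1) := by
    have := (intervalIntegral.intervalIntegrable_rpow' (a := 0) (b := 1 - m)
      (r := -(1/2)) (by norm_num)).comp_sub_left 1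
    rw [sub_zero, show (1:ℝ) - (1 - m) = m by ring] at this
    exact (intervalIntegrable_iff_integrableOn_Ioc_of_le hm1.le).1 this.symm
  have hpart1 : IntegrableOn (fun y : ℝ => (Real.sqrt (y-x))⁻¹ * (Real.sqrt (1-y))⁻¹)
      (Set.Ioc x m) := by
    refine Integrable.mono' (h1.mul_const ((Real.sqrt (1-m))⁻¹))
      hB_meas.aestronglyMeasurable.restrict ?_
    filter_upwards [ae_restrict_mem measurableSet_Ioc] with y hy
    have hyx : 0 < y - x := by linarith [hy.1]
    have h1m : (0:ℝ) < 1 - m := by linarith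
    have h1y : (0:ℝ) < 1 - y := by linarith [hy.2, hm1]
    rw [Real.norm_eq_abs, abs_of_nonneg (by positivity), sqrt_inv_rpow hyx]
    apply mul_le_mul_of_nonneg_left _ (by positivity)
    apply inv_anti₀ (Real.sqrt_pos.2 h1m)
    exact Real.sqrt_le_sqrt (by linarith [hy.2])
  have hpart2 : IntegrableOn (fun y : ℝ => (Real.sqrt (y-x))⁻¹ * (Real.sqrt (1-y))⁻¹)
      (Set.Ioc m 1) := by
    refine Integrable.mono' (h2.const_mul ((Real.sqrt (m-x))⁻¹))
      hB_meas.aestronglyMeasurable.restrict ?_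
    filter_upwards [ae_restrict_mem measurableSet_Ioc] with y hy
    have hyx : 0 < y - x := by linarith [hy.1]
    have hmx : (0:ℝ) < m - x := by linarith
    have h1y : (0:ℝ) ≤ 1 - y := by linarith [hy.2]
    rw [Real.norm_eq_abs, abs_of_nonneg (by positivity)]
    rcases eq_or_lt_of_le h1y with h | h
    · rw [show Real.sqrt (1 - y) = 0 by rw [← h, Real.sqrt_zero], inv_zero, mul_zero]
      positivity
    · rw [sqrt_inv_rpow h]
      apply mul_le_mul_of_nonneg_right _ (by positivity)
      apply inv_anti₀ (Real.sqrt_pos.2 hmx)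
      exact Real.sqrt_le_sqrt (by linarith [hy.1])
  exact (hpart1.union hpart2).mono_set (fun y hy => by
    rcases le_or_gt y m with h | h
    · exact Set.mem_union_left _ ⟨hy.1, h⟩
    · exact Set.mem_union_right _ ⟨h, hy.2.le⟩)

lemma kernel_meas {x : ℝ} :
    Measurable (fun y : ℝ => x / (Real.sqrt (y^2 - x^2) * Real.sqrt (1 - y^2))) :=
  measurable_const.div
    (((Real.continuous_sqrt.measurable).comp ((measurable_id.pow_const 2).sub_const (x^2))).mul
      ((Real.continuous_sqrt.measurable).comp (measurable_const.sub (measurable_id.pow_const 2))))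

lemma integrable_kernel {x : ℝ} (hx0 : 0 < x) (hx1 : x < 1) :
    IntegrableOn (fun y : ℝ => x / (Real.sqrt (y^2 - x^2) * Real.sqrt (1 - y^2)))
      (Set.Ioo x 1) := by
  refine Integrable.mono' (((integrable_B hx0 hx1).const_mul (Real.sqrt x)))
    kernel_meas.aestronglyMeasurable.restrict ?_
  filter_upwards [ae_restrict_mem measurableSet_Ioo] with y hy
  obtain ⟨hy1, hy2⟩ := hy
  have hyx : (0:ℝ) < y - x := by linarith
  have h1y : (0:ℝ) < 1 - y := by linarith
  have hsx : (0:ℝ) < Real.sqrt x := Real.sqrt_pos.2 hx0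
  have e1 : Real.sqrt (y^2 - x^2) = Real.sqrt (y-x) * Real.sqrt (y+x) := by
    rw [← Real.sqrt_mul hyx.le]; ring_nf
  have e2 : Real.sqrt (1 - y^2) = Real.sqrt (1-y) * Real.sqrt (1+y) := by
    rw [← Real.sqrt_mul h1y.le]; ring_nf
  have ha : (0:ℝ) < Real.sqrt (y-x) := Real.sqrt_pos.2 hyx
  have hb : (0:ℝ) < Real.sqrt (1-y) := Real.sqrt_pos.2 h1y
  have hc : Real.sqrt x ≤ Real.sqrt (y+x) := Real.sqrt_le_sqrt (by linarith)
  have hd : (1:ℝ) ≤ Real.sqrt (1+y) := by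
    nlinarith [Real.sq_sqrt (show (0:ℝ) ≤ 1+y by linarith), Real.sqrt_nonneg (1+y)]
  rw [Real.norm_eq_abs, abs_of_nonneg (by positivity), e1, e2]
  have hstep : x / (Real.sqrt (y-x) * Real.sqrt (y+x) * (Real.sqrt (1-y) * Real.sqrt (1+y)))
      ≤ x / (Real.sqrt (y-x) * Real.sqrt x * Real.sqrt (1-y)) := by
    apply div_le_div_of_nonneg_left hx0.le (by positivity)
    nlinarith [mul_le_mul_of_nonneg_right (mul_le_mul_of_nonneg_left hc ha.le) hb.le,
      mul_le_mul_of_nonneg_left hd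
        (mul_nonneg (mul_nonneg ha.le (Real.sqrt_nonneg (y+x))) hb.le)]
  refine hstep.trans (le_of_eq ?_)
  field_simp
  linear_combination (-1 : ℝ) * Real.sq_sqrt hx0.le

lemma gE_ne_top (a : ℝ) : gE a ≠ ⊤ := by
  rw [gE]
  by_cases h : a ∈ Set.Ioo (0:ℝ) 1
  · rw [Set.indicator_of_mem h]; exact ENNReal.ofReal_ne_top
  · rw [Set.indicator_of_notMem h]; exact ENNReal.zero_ne_top

lemma mass_one : volume.withDensity gE Set.univ = 1 := by
  rw [withDensity_apply _ MeasurableSet.univ, Measure.restrict_univ, gE,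
    lintegral_indicator measurableSet_Ioo, lint_one]

lemma D_eq (z : ℝ) : ∫⁻ a, gE a * ENNReal.ofReal a⁻¹ * gE (z/a) ∂volume
    = ENNReal.ofReal (if 0 < z ∧ z < 1 then
        ∫ y in Set.Icc z 1, z / (Real.sqrt (y^2 - z^2) * Real.sqrt (1 - y^2)) else 0) := by
  have hred : ∀ a : ℝ, gE a * ENNReal.ofReal a⁻¹ * gE (z/a)
      = (Set.Ioo (0:ℝ) 1).indicator
          (fun a => ENNReal.ofReal (a / Real.sqrt (1 - a^2)) * ENNReal.ofReal a⁻¹ * gE (z/a)) a := by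
    intro a
    by_cases ha : a ∈ Set.Ioo (0:ℝ) 1
    · rw [Set.indicator_of_mem ha, gE, Set.indicator_of_mem ha]
    · rw [Set.indicator_of_notMem ha, gE, Set.indicator_of_notMem ha, zero_mul, zero_mul]
  simp only [hred]
  rw [lintegral_indicator measurableSet_Ioo]
  by_cases hz : 0 < z ∧ z < 1
  · obtain ⟨hz0, hz1⟩ := hz
    have hptw : ∀ a ∈ Set.Ioo (0:ℝ) 1,
        ENNReal.ofReal (a / Real.sqrt (1 - a^2)) * ENNReal.ofReal a⁻¹ * gE (z/a)
        = (Set.Ioo z 1).indicator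
            (fun a => ENNReal.ofReal (z / (Real.sqrt (a^2 - z^2) * Real.sqrt (1 - a^2)))) a := by
      rintro a ⟨ha0, ha1⟩
      by_cases haz : z < a
      · rw [Set.indicator_of_mem (show a ∈ Set.Ioo z 1 from ⟨haz, ha1⟩)]
        have hmem : z/a ∈ Set.Ioo (0:ℝ) 1 := ⟨by positivity, (div_lt_one ha0).2 haz⟩
        rw [gE, Set.indicator_of_mem hmem]
        have h1a : (0:ℝ) < 1 - a^2 := by nlinarith
        have haz2 : (0:ℝ) < a^2 - z^2 := by nlinarith
        rw [← ENNReal.ofReal_mul (by positivity), ← ENNReal.ofReal_mul (by positivity)]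
        congr 1
        have e1 : 1 - (z/a)^2 = (a^2 - z^2)/a^2 := by field_simp
        have e2 : Real.sqrt ((a^2 - z^2)/a^2) = Real.sqrt (a^2 - z^2) / a := by
          rw [Real.sqrt_div haz2.le, Real.sqrt_sq ha0.le]
        have s1 : Real.sqrt (1-a^2) ≠ 0 := (Real.sqrt_pos.2 h1a).ne'
        have s2 : Real.sqrt (a^2-z^2) ≠ 0 := (Real.sqrt_pos.2 haz2).ne'
        rw [e1, e2]
        field_simp
      · push_neg at haz
        rw [Set.indicator_of_notMem (by simp [Set.mem_Ioo]; intro h; linarith)]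
        have : ¬ (z/a ∈ Set.Ioo (0:ℝ) 1) := by
          simp only [Set.mem_Ioo, not_and]
          intro _
          rw [not_lt]
          exact (one_le_div ha0).2 haz
        rw [gE, Set.indicator_of_notMem this, mul_zero]
    rw [setLIntegral_congr_fun measurableSet_Ioo hptw]
    rw [lintegral_indicator measurableSet_Ioo, Measure.restrict_restrict measurableSet_Ioo,
      Set.inter_eq_self_of_subset_left (Set.Ioo_subset_Ioo hz0.le le_rfl)]
    rw [if_pos ⟨hz0, hz1⟩]
    rw [← ofReal_integral_eq_lintegral_ofReal (integrable_kernel hz0 hz1)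
      (Filter.Eventually.of_forall fun a => by positivity)]
    rw [MeasureTheory.integral_Icc_eq_integral_Ioo]
  · rw [if_neg hz]
    have hzero : ∀ a ∈ Set.Ioo (0:ℝ) 1,
        ENNReal.ofReal (a / Real.sqrt (1 - a^2)) * ENNReal.ofReal a⁻¹ * gE (z/a) = 0 := by
      rintro a ⟨ha0, ha1⟩
      have : ¬ (z/a ∈ Set.Ioo (0:ℝ) 1) := by
        simp only [Set.mem_Ioo, not_and]
        rcases not_and_or.1 hz with h | h
        · intro hpos
          have : z / a ≤ 0 := div_nonpos_iff.mpr (Or.inr ⟨not_lt.1 h, ha0.le⟩)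
          linarith
        · intro _
          rw [not_lt]
          push_neg at h
          calc (1:ℝ) ≤ z := h
            _ ≤ z/a := by
              rw [le_div_iff₀ ha0]
              nlinarith
      rw [gE, Set.indicator_of_notMem this, mul_zero]
    rw [setLIntegral_congr_fun measurableSet_Ioo hzero]
    simp

lemma mapMul : Measure.map (fun p : ℝ × ℝ => p.1 * p.2)
      ((volume.withDensity gE).prod (volume.withDensity gE))
    = volume.withDensity (fun x => ENNReal.ofReal
        (if 0 < x ∧ x < 1 then
          ∫ y in Set.Icc x 1, x / (Real.sqrt (y^2 - x^2) * Real.sqrt (1 - y^2)) else 0)) := by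
  haveI : IsProbabilityMeasure (volume.withDensity gE) := ⟨mass_one⟩
  set μ := volume.withDensity gE with hμ
  have hmul : Measurable (fun p : ℝ × ℝ => p.1 * p.2) := measurable_fst.mul measurable_snd
  refine Measure.ext (fun s hs => ?_)
  have hT : MeasurableSet ((fun p : ℝ × ℝ => p.1 * p.2) ⁻¹' s) := hmul hs
  rw [Measure.map_apply hmul hs, Measure.prod_apply hT]
  have inner_eq : ∀ a : ℝ, 0 < a →
      μ (Prod.mk a ⁻¹' ((fun p : ℝ × ℝ => p.1 * p.2) ⁻¹' s))
        = ENNReal.ofReal a⁻¹ * ∫⁻ z, gE (z/a) * s.indicator 1 z ∂volume := by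
    intro a ha
    have hTa : MeasurableSet (Prod.mk a ⁻¹' ((fun p : ℝ × ℝ => p.1 * p.2) ⁻¹' s)) :=
      measurable_prodMk_left hT
    have hK : Measurable (fun z : ℝ => gE (z/a) * s.indicator 1 z) :=
      (gE_meas.comp (measurable_id.div_const a)).mul (measurable_one.indicator hs)
    calc μ (Prod.mk a ⁻¹' ((fun p : ℝ × ℝ => p.1 * p.2) ⁻¹' s))
        = ∫⁻ b, (fun z : ℝ => gE (z/a) * s.indicator 1 z) (a * b) ∂volume := by
          rw [hμ, withDensity_apply _ hTa, ← lintegral_indicator hTa]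
          refine lintegral_congr fun b => ?_
          have hmemiff : (b ∈ Prod.mk a ⁻¹' ((fun p : ℝ × ℝ => p.1 * p.2) ⁻¹' s)) ↔ a * b ∈ s :=
            Iff.rfl
          by_cases hb : a * b ∈ s
          · rw [Set.indicator_of_mem (hmemiff.2 hb)]
            show gE b = gE (a*b/a) * s.indicator 1 (a*b)
            rw [Set.indicator_of_mem hb, Pi.one_apply, mul_one, mul_div_cancel_left₀ b ha.ne']
          · rw [Set.indicator_of_notMem (fun hmem => hb (hmemiff.1 hmem))]
            show (0:ENNReal) = gE (a*b/a) * s.indicator 1 (a*b)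
            rw [Set.indicator_of_notMem hb, mul_zero]
      _ = ∫⁻ z, (fun z : ℝ => gE (z/a) * s.indicator 1 z) z
            ∂(Measure.map (fun b : ℝ => a * b) volume) :=
          (lintegral_map hK (measurable_const_mul a)).symm
      _ = ENNReal.ofReal |a⁻¹| * ∫⁻ z, gE (z/a) * s.indicator 1 z ∂volume := by
          rw [Real.map_volume_mul_left ha.ne', lintegral_smul_measure, smul_eq_mul]
      _ = ENNReal.ofReal a⁻¹ * ∫⁻ z, gE (z/a) * s.indicator 1 z ∂volume := by
          rw [abs_inv, abs_of_pos ha]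
  have step1 : ∫⁻ a, μ (Prod.mk a ⁻¹' ((fun p : ℝ × ℝ => p.1 * p.2) ⁻¹' s)) ∂μ
      = ∫⁻ a, ∫⁻ z, gE a * ENNReal.ofReal a⁻¹ * (gE (z/a) * s.indicator 1 z) ∂volume ∂volume := by
    rw [hμ, lintegral_withDensity_eq_lintegral_mul _ gE_meas
      (measurable_measure_prodMk_left hT)]
    refine lintegral_congr fun a => ?_
    simp only [Pi.mul_apply]
    by_cases ha : a ∈ Set.Ioo (0:ℝ) 1
    · rw [inner_eq a ha.1, ← mul_assoc]
      exact (lintegral_const_mul' _ _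
        (ENNReal.mul_ne_top (gE_ne_top a) ENNReal.ofReal_ne_top)).symm
    · have hga : gE a = 0 := by rw [gE, Set.indicator_of_notMem ha]
      rw [hga, zero_mul]
      symm
      calc ∫⁻ z, (0:ENNReal) * ENNReal.ofReal a⁻¹ * (gE (z/a) * s.indicator 1 z) ∂volume
          = ∫⁻ (_ : ℝ), 0 ∂volume := lintegral_congr fun z => by rw [zero_mul, zero_mul]
        _ = 0 := lintegral_zero
  rw [step1]
  have hswap : ∫⁻ a, ∫⁻ z, gE a * ENNReal.ofReal a⁻¹ * (gE (z/a) * s.indicator 1 z) ∂volume ∂volume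
      = ∫⁻ z, ∫⁻ a, gE a * ENNReal.ofReal a⁻¹ * (gE (z/a) * s.indicator 1 z) ∂volume ∂volume := by
    apply lintegral_lintegral_swap
    apply Measurable.aemeasurable
    exact ((gE_meas.comp measurable_fst).mul
        (ENNReal.measurable_ofReal.comp (measurable_fst.inv))).mul
      ((gE_meas.comp (measurable_snd.div measurable_fst)).mul
        ((measurable_one.indicator hs).comp measurable_snd))
  rw [hswap]
  have step2 : ∫⁻ z, ∫⁻ a, gE a * ENNReal.ofReal a⁻¹ * (gE (z/a) * s.indicator 1 z) ∂volume ∂volume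
      = ∫⁻ z in s, ∫⁻ a, gE a * ENNReal.ofReal a⁻¹ * gE (z/a) ∂volume ∂volume :=
    calc ∫⁻ z, ∫⁻ a, gE a * ENNReal.ofReal a⁻¹ * (gE (z/a) * s.indicator 1 z) ∂volume ∂volume
        = ∫⁻ z, s.indicator
            (fun z => ∫⁻ a, gE a * ENNReal.ofReal a⁻¹ * gE (z/a) ∂volume) z ∂volume := by
          refine lintegral_congr fun z => ?_
          by_cases hzs : z ∈ s
          · rw [Set.indicator_of_mem hzs
              (fun z => ∫⁻ a, gE a * ENNReal.ofReal a⁻¹ * gE (z/a) ∂volume)]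
            refine lintegral_congr fun a => ?_
            rw [Set.indicator_of_mem hzs, Pi.one_apply, mul_one]
          · rw [Set.indicator_of_notMem hzs
              (fun z => ∫⁻ a, gE a * ENNReal.ofReal a⁻¹ * gE (z/a) ∂volume)]
            calc ∫⁻ a, gE a * ENNReal.ofReal a⁻¹ * (gE (z/a) * s.indicator 1 z) ∂volume
                = ∫⁻ (_ : ℝ), 0 ∂volume := lintegral_congr fun a => by
                  rw [Set.indicator_of_notMem hzs, mul_zero, mul_zero]
              _ = 0 := lintegral_zero
      _ = ∫⁻ z in s, ∫⁻ a, gE a * ENNReal.ofReal a⁻¹ * gE (z/a) ∂volume ∂volume :=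
          lintegral_indicator hs _
  rw [step2, withDensity_apply _ hs]
  exact setLIntegral_congr_fun hs (fun z _ => D_eq z)

/-- If `X₀, X₁` are independent uniforms on `[-2,2]` and `Ωᵢ = arccos(Xᵢ/2)`, then
`sin Ω₀ · sin Ω₁` has the stated integral density on `(0,1)`. -/
theorem density_of_product_sin_arccos
    {Ω : Type*} [MeasureSpace Ω] [IsProbabilityMeasure (ℙ : Measure Ω)]
    (X₀ X₁ : Ω → ℝ) (hX₀ : Measurable X₀) (hX₁ : Measurable X₁)
    (hindep : IndepFun X₀ X₁ ℙ)
    (hU₀ : Measure.map X₀ ℙ = (4 : ENNReal)⁻¹ • volume.restrict (Set.Icc (-2 : ℝ) 2))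
    (hU₁ : Measure.map X₁ ℙ = (4 : ENNReal)⁻¹ • volume.restrict (Set.Icc (-2 : ℝ) 2)) :
    Measure.map
        (fun ω => Real.sin (Real.arccos (X₀ ω / 2)) * Real.sin (Real.arccos (X₁ ω / 2))) ℙ
      = volume.withDensity
          (fun x => ENNReal.ofReal
            (if 0 < x ∧ x < 1 then
              ∫ y in Set.Icc x 1, x / (Real.sqrt (y ^ 2 - x ^ 2) * Real.sqrt (1 - y ^ 2))
            else 0)) := by
  have hY₀ : Measurable (fun ω => Real.sin (Real.arccos (X₀ ω / 2))) := phi_meas.comp hX₀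
  have hY₁ : Measurable (fun ω => Real.sin (Real.arccos (X₁ ω / 2))) := phi_meas.comp hX₁
  have hmap0 : Measure.map (fun ω => Real.sin (Real.arccos (X₀ ω / 2))) ℙ
      = volume.withDensity gE := by
    rw [show (fun ω => Real.sin (Real.arccos (X₀ ω / 2)))
        = (fun x : ℝ => Real.sin (Real.arccos (x / 2))) ∘ X₀ from rfl,
      ← Measure.map_map phi_meas hX₀, hU₀, mapA]
  have hmap1 : Measure.map (fun ω => Real.sin (Real.arccos (X₁ ω / 2))) ℙ
      = volume.withDensity gE := by
    rw [show (fun ω => Real.sin (Real.arccos (X₁ ω / 2)))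
        = (fun x : ℝ => Real.sin (Real.arccos (x / 2))) ∘ X₁ from rfl,
      ← Measure.map_map phi_meas hX₁, hU₁, mapA]
  have hi : IndepFun (fun ω => Real.sin (Real.arccos (X₀ ω / 2)))
      (fun ω => Real.sin (Real.arccos (X₁ ω / 2))) ℙ :=
    hindep.comp phi_meas phi_meas
  have hpair : Measure.map
      (fun ω => (Real.sin (Real.arccos (X₀ ω / 2)), Real.sin (Real.arccos (X₁ ω / 2)))) ℙ
      = (volume.withDensity gE).prod (volume.withDensity gE) := by
    exact ((indepFun_iff_map_prod_eq_prod_map_map hY₀.aemeasurable hY₁.aemeasurable).1 hi).trans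
      (by rw [hmap0, hmap1])
  calc Measure.map
        (fun ω => Real.sin (Real.arccos (X₀ ω / 2)) * Real.sin (Real.arccos (X₁ ω / 2))) ℙ
      = Measure.map ((fun p : ℝ × ℝ => p.1 * p.2) ∘
          (fun ω => (Real.sin (Real.arccos (X₀ ω / 2)), Real.sin (Real.arccos (X₁ ω / 2))))) ℙ :=
        rfl
    _ = Measure.map (fun p : ℝ × ℝ => p.1 * p.2) (Measure.map
          (fun ω => (Real.sin (Real.arccos (X₀ ω / 2)), Real.sin (Real.arccos (X₁ ω / 2)))) ℙ) :=
        (Measure.map_map (measurable_fst.mul measurable_snd) (hY₀.prodMk hY₁)).symm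
    _ = Measure.map (fun p : ℝ × ℝ => p.1 * p.2)
          ((volume.withDensity gE).prod (volume.withDensity gE)) := by rw [hpair]
    _ = volume.withDensity
          (fun x => ENNReal.ofReal
            (if 0 < x ∧ x < 1 then
              ∫ y in Set.Icc x 1, x / (Real.sqrt (y ^ 2 - x ^ 2) * Real.sqrt (1 - y ^ 2))
            else 0)) := mapMul
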